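/- arXiv:2104.02440 — 5 statements merged into one kernel-verified Lean document; each statement's English description precedes it below -/
import Mathlib

section
/- Let a_1 ≤ a_2 ≤ ... ≤ a_k be integers with 2 ≤ a_1, and let L be the diagonal form ⟨a_1,...,a_k⟩. Suppose that there are positive integers m and i with i ≤ k such that: (1) m is represented by L; (2) m is not represented by the diagonal form ⟨a_1,...,a_i⟩; (3) m < a_i + a_1. Then there is an index j with i+1 ≤ j ≤ k such that a_j = m. -/
/-- An integer `m` is represented by the diagonal quadratic form with coefficients
`a j` for `j` in some index set restricted by the predicate `p`. -/
theorem stmt_0 (k : ℕ) (hk : 0 < k) (a : Fin k → ℤ)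
    (hmono : Monotone a) (h2 : 2 ≤ a ⟨0, hk⟩)
    (m : ℤ) (hm : 0 < m) (i : ℕ) (hi1 : 1 ≤ i) (hik : i ≤ k)
    (H1 : ∃ x : Fin k → ℤ, ∑ j, a j * (x j) ^ 2 = m)
    (H2 : ¬ ∃ x : Fin k → ℤ, (∀ j : Fin k, i ≤ (j : ℕ) → x j = 0) ∧
      ∑ j, a j * (x j) ^ 2 = m)
    (H3 : m < a ⟨i - 1, by omega⟩ + a ⟨0, hk⟩) :
    ∃ j : Fin k, i ≤ (j : ℕ) ∧ a j = m := by
  classical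
  obtain ⟨x, hx⟩ := H1
  have ha : ∀ l : Fin k, 2 ≤ a l := fun l =>
    le_trans h2 (hmono (by simp [Fin.le_def]))
  have hnonneg : ∀ l : Fin k, 0 ≤ a l * x l ^ 2 := fun l =>
    mul_nonneg (by linarith [ha l]) (sq_nonneg _)
  have hex : ∃ j : Fin k, i ≤ (j : ℕ) ∧ x j ≠ 0 := by
    by_contra h
    push_neg at h
    exact H2 ⟨x, fun j hj => h j hj, hx⟩
  obtain ⟨j, hji, hxj⟩ := hex
  have haj : a ⟨i - 1, by omega⟩ ≤ a j := hmono (by simp [Fin.le_def]; omega)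
  have ha0j : a ⟨0, hk⟩ ≤ a j := hmono (by simp [Fin.le_def])
  have hsum := Fintype.sum_eq_add_sum_compl j (fun l => a l * x l ^ 2)
  set S := ∑ l ∈ ({j}ᶜ : Finset (Fin k)), a l * x l ^ 2 with hSdef
  have hS0 : 0 ≤ S := Finset.sum_nonneg fun l _ => hnonneg l
  have hkey : a j * x j ^ 2 + S = m := by rw [← hsum]; exact hx
  have h1 : 1 ≤ x j ^ 2 := by nlinarith [sq_abs (x j), Int.one_le_abs hxj]
  have hx2 : x j ^ 2 = 1 := by
    by_contra h
    have h2' : 2 ≤ x j ^ 2 := by omega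
    have : 2 * a j ≤ a j * x j ^ 2 := by nlinarith [ha j]
    linarith
  rw [hx2, mul_one] at hkey
  have hSz : S = 0 := by
    have hzero : ∀ l ∈ ({j}ᶜ : Finset (Fin k)), a l * x l ^ 2 = 0 := by
      intro l hl
      have hterm : a l * x l ^ 2 ≤ S :=
        Finset.single_le_sum (fun t _ => hnonneg t) hl
      have hxl : x l = 0 := by
        by_contra hxl
        have hl1 : 1 ≤ x l ^ 2 := by nlinarith [sq_abs (x l), Int.one_le_abs hxl]
        have hal : a ⟨0, hk⟩ ≤ a l := hmono (by simp [Fin.le_def])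
        nlinarith [ha l]
      simp [hxl]
    exact Finset.sum_eq_zero hzero
  exact ⟨j, hji, by linarith⟩
end

section
/- Let L = ⟨a_1,...,a_k⟩ be a diagonal form with 2 ≤ a_1 ≤ a_2 ≤ ... ≤ a_k that is T(a_1)-universal. Let r and s be positive integers with r < s, r ≤ a_1 − 1 and s ≤ k − 1. Assume there are integers m_1,...,m_r with a_s < m_1 < m_2 < ... < m_r < a_s + a_1 and indices 1 ≤ l_1 < l_2 < ... < l_{s−r} ≤ s such that: (1) for each i = 1,...,r, m_i is not represented by ⟨a_1,...,a_s⟩; (2) the diagonal form ⟨a_{l_1},...,a_{l_{s−r}}, m_1,...,m_r⟩ is T(a_1)-universal. Then some proper subsequence of (a_1,...,a_k) gives a diagonal form that is T(a_1)-universal (i.e., L is not new). -/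
/-- `m` is represented by the diagonal quadratic form whose coefficients are the
entries of the list `l`. -/
def ListRep (l : List ℤ) (m : ℤ) : Prop :=
  ∃ x : Fin l.length → ℤ, ∑ i, l.get i * (x i) ^ 2 = m

/-- The diagonal form given by the list `l` represents every integer `≥ n`. -/
def ListUniv (n : ℤ) (l : List ℤ) : Prop :=
  ∀ m : ℤ, n ≤ m → ListRep l m

lemma listRep_cons (c : ℤ) (l : List ℤ) (m : ℤ) :
    ListRep (c :: l) m ↔ ∃ y : ℤ, ListRep l (m - c * y ^ 2) := by
  constructor
  · rintro ⟨x, hx⟩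
    have hx' : ∑ i : Fin (l.length + 1), (c :: l).get i * x i ^ 2 = m := hx
    rw [Fin.sum_univ_succ] at hx'
    simp only [List.get_cons_zero, List.get_cons_succ] at hx'
    refine ⟨x (0 : Fin (l.length + 1)), fun i => x i.succ, ?_⟩
    show ∑ i : Fin l.length, l.get i * (x i.succ) ^ 2 = _
    have he : ∑ i : Fin l.length, (c :: l).get i.succ * x i.succ ^ 2
        = ∑ i : Fin l.length, l.get i * x i.succ ^ 2 := rfl
    rw [he] at hx'
    linarith [hx']
  · rintro ⟨y, x, hx⟩
    refine ⟨(Fin.cons y x : Fin (l.length + 1) → ℤ), ?_⟩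
    show ∑ i : Fin (l.length + 1), (c :: l).get i * ((Fin.cons y x : Fin (l.length + 1) → ℤ) i) ^ 2 = m
    rw [Fin.sum_univ_succ]
    simp only [Fin.cons_zero, Fin.cons_succ, List.get_cons_zero]
    have he : ∑ i : Fin l.length, (c :: l).get i.succ * x i ^ 2
        = ∑ i : Fin l.length, l.get i * x i ^ 2 := rfl
    rw [he]
    linarith [hx]

lemma listRep_perm {l l' : List ℤ} (h : l.Perm l') : ∀ m, ListRep l m → ListRep l' m := by
  induction h with
  | nil => exact fun m h => h
  | cons c _ ih =>
    intro m hm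
    rw [listRep_cons] at hm ⊢
    obtain ⟨y, hy⟩ := hm
    exact ⟨y, ih _ hy⟩
  | swap c d l =>
    intro m hm
    rw [listRep_cons] at hm ⊢
    obtain ⟨y, hy⟩ := hm
    rw [listRep_cons] at hy
    obtain ⟨z, hz⟩ := hy
    refine ⟨z, ?_⟩
    rw [listRep_cons]
    refine ⟨y, ?_⟩
    rw [show m - c * z ^ 2 - d * y ^ 2 = m - d * y ^ 2 - c * z ^ 2 by ring]
    exact hz
  | trans _ _ ih1 ih2 => exact fun m hm => ih2 _ (ih1 _ hm)

lemma listRep_ofFn {n : ℕ} (f : Fin n → ℤ) (m : ℤ) :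
    ListRep (List.ofFn f) m ↔ ∃ x : Fin n → ℤ, ∑ i, f i * x i ^ 2 = m := by
  constructor
  · rintro ⟨x, hx⟩
    refine ⟨fun i => x (Fin.cast (List.length_ofFn (f := f)).symm i), ?_⟩
    rw [← hx]
    refine (Fintype.sum_equiv (finCongr (List.length_ofFn (f := f))) _ _ ?_).symm
    intro i
    simp only [List.get_ofFn, finCongr_apply]
    try rfl
  · rintro ⟨x, hx⟩
    refine ⟨fun i => x (Fin.cast (List.length_ofFn (f := f)) i), ?_⟩
    rw [← hx]
    refine Fintype.sum_equiv (finCongr (List.length_ofFn (f := f))) _ _ ?_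
    intro i
    simp only [List.get_ofFn, finCongr_apply]
    try rfl

set_option maxHeartbeats 1000000

theorem stmt_1 (k : ℕ) (hk : 0 < k) (a : Fin k → ℤ)
    (hmono : Monotone a) (h2 : 2 ≤ a ⟨0, hk⟩)
    (huniv : ListUniv (a ⟨0, hk⟩) (List.ofFn a))
    (r s : ℕ) (hr : 0 < r) (hrs : r < s)
    (hra : (r : ℤ) ≤ a ⟨0, hk⟩ - 1) (hsk : s ≤ k - 1)
    (mv : Fin r → ℤ) (hmv : StrictMono mv)
    (hm1 : a ⟨s - 1, by omega⟩ < mv ⟨0, hr⟩)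
    (hmr : mv ⟨r - 1, by omega⟩ < a ⟨s - 1, by omega⟩ + a ⟨0, hk⟩)
    (lidx : Fin (s - r) → Fin k) (hlmono : StrictMono lidx)
    (hls : ∀ t : Fin (s - r), (lidx t : ℕ) < s)
    (H1 : ∀ i : Fin r, ¬ ∃ x : Fin k → ℤ,
      (∀ j : Fin k, s ≤ (j : ℕ) → x j = 0) ∧ ∑ j, a j * (x j) ^ 2 = mv i)
    (H2 : ListUniv (a ⟨0, hk⟩) (List.ofFn (fun t => a (lidx t)) ++ List.ofFn mv)) :
    ∃ l' : List ℤ, List.Sublist l' (List.ofFn a) ∧ l' ≠ List.ofFn a ∧ ListUniv (a ⟨0, hk⟩) l' := by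
  classical
  have hsk' : s < k := by omega
  have hs1k : s - 1 < k := by omega
  have hpos : ∀ jj : Fin k, a ⟨0, hk⟩ ≤ a jj := fun jj => hmono (by simp [Fin.le_def])
  have has1 : a ⟨0, hk⟩ ≤ a ⟨s - 1, hs1k⟩ := hmono (by simp [Fin.le_def])
  have key : ∀ i : Fin r, ∃ jj : Fin k, s ≤ (jj : ℕ) ∧ a jj = mv i := by
    intro i
    have hlow : a ⟨s - 1, hs1k⟩ < mv i :=
      lt_of_lt_of_le hm1 (hmv.monotone (by simp [Fin.le_def]))
    have hhigh : mv i < a ⟨s - 1, hs1k⟩ + a ⟨0, hk⟩ :=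
      lt_of_le_of_lt (hmv.monotone (by simp [Fin.le_def]; omega)) hmr
    have hrep := huniv (mv i) (by linarith)
    rw [listRep_ofFn] at hrep
    obtain ⟨x, hx⟩ := hrep
    have hex : ∃ jj : Fin k, s ≤ (jj : ℕ) ∧ x jj ≠ 0 := by
      by_contra hcon
      push_neg at hcon
      exact H1 i ⟨x, hcon, hx⟩
    obtain ⟨j0, hj0s, hj0x⟩ := hex
    have haj0 : a ⟨s - 1, hs1k⟩ ≤ a j0 := hmono (by simp [Fin.le_def]; omega)
    have hnn : ∀ jj : Fin k, 0 ≤ a jj * x jj ^ 2 :=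
      fun jj => mul_nonneg (by linarith [hpos jj]) (sq_nonneg _)
    have hterm_le : a j0 * x j0 ^ 2 ≤ mv i := by
      rw [← hx]
      exact Finset.single_le_sum (fun jj _ => hnn jj) (Finset.mem_univ j0)
    have hx1 : 1 ≤ x j0 ^ 2 := by
      rcases lt_or_ge (x j0) 0 with h | h
      · nlinarith
      · have : 1 ≤ x j0 := by omega
        nlinarith
    have hx2 : x j0 ^ 2 = 1 := by
      by_contra hne
      have habs : 2 ≤ |x j0| := by
        rcases lt_or_ge (|x j0|) 2 with h | h
        · exfalso
          have h1 : 1 ≤ |x j0| := Int.one_le_abs hj0x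
          have : |x j0| = 1 := by omega
          apply hne
          nlinarith [sq_abs (x j0)]
        · exact h
      have h4 : 4 ≤ x j0 ^ 2 := by nlinarith [sq_abs (x j0)]
      have := mul_le_mul_of_nonneg_left h4 (by linarith [hpos j0] : (0 : ℤ) ≤ a j0)
      nlinarith [hpos j0]
    refine ⟨j0, hj0s, ?_⟩
    have hsplit : a j0 * x j0 ^ 2 + ∑ jj ∈ Finset.univ.erase j0, a jj * x jj ^ 2 = mv i := by
      rw [← hx]
      exact Finset.add_sum_erase Finset.univ (fun jj => a jj * x jj ^ 2) (Finset.mem_univ j0)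
    have hrest : ∑ jj ∈ Finset.univ.erase j0, a jj * x jj ^ 2 = 0 := by
      by_contra hne
      have : ∃ j1 ∈ Finset.univ.erase j0, a j1 * x j1 ^ 2 ≠ 0 := by
        by_contra hall
        push_neg at hall
        exact hne (Finset.sum_eq_zero hall)
      obtain ⟨j1, hj1mem, hj1⟩ := this
      have hxj1 : x j1 ≠ 0 := by
        intro h0
        apply hj1
        rw [h0]
        ring
      have hxj1sq : 1 ≤ x j1 ^ 2 := by
        rcases lt_or_ge (x j1) 0 with h | h
        · nlinarith
        · have : 1 ≤ x j1 := by omega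
          nlinarith
      have h1 : a ⟨0, hk⟩ ≤ a j1 * x j1 ^ 2 := by nlinarith [hpos j1]
      have hsum_ge : a ⟨0, hk⟩ ≤ ∑ jj ∈ Finset.univ.erase j0, a jj * x jj ^ 2 :=
        le_trans h1 (Finset.single_le_sum (fun jj _ => hnn jj) hj1mem)
      rw [hx2] at hsplit
      linarith
    rw [hrest, hx2] at hsplit
    linarith
  choose j hjs hja using key
  have hjinj : Function.Injective j := fun i i' h => hmv.injective (by rw [← hja, ← hja, h])
  set S : Finset (Fin k) := Finset.univ.image lidx ∪ Finset.univ.image j with hS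
  set idxl : List (Fin k) := (List.finRange k).filter (fun i => i ∈ S) with hidxl
  have hnd : idxl.Nodup := (List.nodup_finRange k).filter _
  have hmemS : ∀ i : Fin k, i ∈ idxl ↔ i ∈ S := by
    intro i
    simp [hidxl, List.mem_filter, List.mem_finRange]
  have hcard : S.card = s := by
    rw [hS, Finset.card_union_of_disjoint]
    · rw [Finset.card_image_of_injective _ hlmono.injective,
        Finset.card_image_of_injective _ hjinj]
      simp only [Finset.card_univ, Fintype.card_fin]
      omega
    · rw [Finset.disjoint_left]
      rintro i hi1 hi2
      simp only [Finset.mem_image, Finset.mem_univ, true_and] at hi1 hi2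
      obtain ⟨t, ht⟩ := hi1
      obtain ⟨u, hu⟩ := hi2
      have h1 := hls t
      have h2 := hjs u
      rw [ht] at h1
      rw [hu] at h2
      omega
  have hlen : idxl.length = s := by
    have htf : idxl.toFinset = S := by
      ext i
      rw [List.mem_toFinset]
      exact hmemS i
    rw [← hcard, ← htf]
    exact (List.toFinset_card_of_nodup hnd).symm
  refine ⟨idxl.map a, ?_, ?_, ?_⟩
  · rw [List.ofFn_eq_map]
    exact List.filter_sublist.map a
  · intro heq
    have : (idxl.map a).length = (List.ofFn a).length := by rw [heq]
    rw [List.length_map, List.length_ofFn, hlen] at this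
    omega
  · intro m hm
    have hperm : (List.ofFn (fun t => a (lidx t)) ++ List.ofFn mv).Perm (idxl.map a) := by
      have h1 : List.ofFn (fun t => a (lidx t)) = (List.ofFn lidx).map a := by
        rw [List.map_ofFn]
        rfl
      have h2 : List.ofFn mv = (List.ofFn j).map a := by
        rw [List.map_ofFn]
        exact congrArg List.ofFn (funext fun i => (hja i).symm)
      rw [h1, h2, ← List.map_append]
      refine List.Perm.map a ?_
      rw [List.perm_ext_iff_of_nodup]
      · intro i
        rw [hmemS i]
        simp only [List.mem_append, List.mem_ofFn, hS, Finset.mem_union, Finset.mem_image,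
          Finset.mem_univ, true_and, Set.mem_range]
        try tauto
      · rw [List.nodup_append]
        refine ⟨List.nodup_ofFn.mpr hlmono.injective, List.nodup_ofFn.mpr hjinj, ?_⟩
        rintro i hi1 _ hi2 rfl
        simp only [List.mem_ofFn, Set.mem_range] at hi1 hi2
        obtain ⟨t, ht⟩ := hi1
        obtain ⟨u, hu⟩ := hi2
        have h1 := hls t
        have h2 := hjs u
        rw [ht] at h1
        rw [hu] at h2
        omega
      · exact hnd
    exact listRep_perm hperm m (H2 m hm)
end

section
/- Let n be an integer greater than 1 and let L = ⟨a_1,...,a_k⟩ with a_1 ≤ ... ≤ a_k positive integers be a diagonal tight T(n)-universal form. Then either (n, n+1, n+2, ..., 2n) is a subsequence of (a_1,...,a_k), or (n, n, n+1, n+2, ..., 2n−1) is a subsequence of (a_1,...,a_k). -/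
/-- The diagonal form given by `l` is tight `T(n)`-universal: the nonzero integers
it represents are exactly the integers `≥ n`. -/
def ListTight (n : ℕ) (l : List ℤ) : Prop :=
  ∀ m : ℤ, m ≠ 0 → (ListRep l m ↔ (n : ℤ) ≤ m)

lemma sq_cases (y : ℤ) (hy : y ≠ 0) : y ^ 2 = 1 ∨ 4 ≤ y ^ 2 := by
  rcases le_or_gt 2 |y| with h | h
  · right; nlinarith [sq_abs y]
  · left
    have h1 : 1 ≤ |y| := Int.one_le_abs hy
    have h2 : |y| = 1 := by omega
    nlinarith [sq_abs y]

lemma two_le_count {α : Type*} [DecidableEq α] {l : List α} {a : α} {i j : Fin l.length}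
    (hij : (i : ℕ) < j) (hi : l.get i = a) (hj : l.get j = a) : 2 ≤ l.count a := by
  have hjl : (j : ℕ) < l.length := j.2
  have h1 : a ∈ l.take j := by
    have hlen : (i : ℕ) < (l.take (j : ℕ)).length := by
      simp [List.length_take]; omega
    have h : (l.take (j : ℕ))[(i : ℕ)] = a := by
      rw [List.getElem_take]
      simpa using hi
    exact h ▸ List.getElem_mem hlen
  have h2 : a ∈ l.drop j := by
    have hlen : 0 < (l.drop (j : ℕ)).length := by
      simp [List.length_drop]
    have h : (l.drop (j : ℕ))[0] = a := by
      rw [List.getElem_drop]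
      simpa using hj
    exact h ▸ List.getElem_mem hlen
  calc 2 = 1 + 1 := rfl
    _ ≤ (l.take j).count a + (l.drop j).count a :=
        Nat.add_le_add (List.count_pos_iff.mpr h1) (List.count_pos_iff.mpr h2)
    _ = l.count a := by rw [← List.count_append, List.take_append_drop]

lemma rep_structure (n : ℤ) (hn : 0 < n) (l : List ℤ) (hcoeff : ∀ a ∈ l, n ≤ a)
    (m : ℤ) (hm : 0 < m) (hlt : m ≤ 2 * n) (hrep : ListRep l m) :
    m ∈ l ∨ (m = 2 * n ∧ 2 ≤ l.count n) := by
  obtain ⟨x, hx⟩ := hrep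
  set s : Finset (Fin l.length) := Finset.univ.filter (fun i => x i ≠ 0) with hs
  have hxs : ∀ i ∈ s, x i ≠ 0 := by intro i hi; exact (Finset.mem_filter.mp hi).2
  have hsum : ∑ i ∈ s, l.get i * (x i) ^ 2 = m := by
    rw [← hx]
    apply Finset.sum_filter_of_ne
    intro i _ hne hxi
    exact hne (by rw [hxi]; ring)
  have hterm : ∀ i ∈ s, n ≤ l.get i * (x i) ^ 2 := by
    intro i hi
    have hxi := hxs i hi
    have h1 : 1 ≤ (x i) ^ 2 := by
      have h0 : 0 < (x i) ^ 2 :=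
        lt_of_le_of_ne (sq_nonneg _) (Ne.symm (pow_ne_zero 2 hxi))
      omega
    have ha : n ≤ l.get i := hcoeff _ (by simpa using l.get_mem i i.2)
    nlinarith
  have hcard : (s.card : ℤ) * n ≤ m := by
    have := Finset.card_nsmul_le_sum s _ n hterm
    rw [hsum, nsmul_eq_mul] at this
    exact this
  have hne : s.Nonempty := by
    rcases s.eq_empty_or_nonempty with h | h
    · rw [h, Finset.sum_empty] at hsum; omega
    · exact h
  have hc1 : 1 ≤ s.card := Finset.card_pos.mpr hne
  have hc2 : s.card ≤ 2 := by
    by_contra h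
    push_neg at h
    have : (3 : ℤ) ≤ (s.card : ℤ) := by exact_mod_cast h
    nlinarith
  have single : ∀ (i : Fin l.length) (v : ℤ), l.get i * (x i) ^ 2 = v → x i ≠ 0 →
      v ≤ 2 * n → l.get i = v := by
    intro i v hv hxi hvle
    have ha : n ≤ l.get i := hcoeff _ (by simpa using l.get_mem i i.2)
    rcases sq_cases (x i) hxi with h | h
    · rw [h, mul_one] at hv; exact hv
    · nlinarith
  interval_cases h : s.card
  · obtain ⟨i, hi⟩ := Finset.card_eq_one.mp h
    rw [hi, Finset.sum_singleton] at hsum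
    have hxi : x i ≠ 0 := hxs i (hi ▸ Finset.mem_singleton_self i)
    left
    have heq := single i m hsum hxi hlt
    exact heq ▸ (by simpa using l.get_mem i i.2 : l.get i ∈ l)
  · obtain ⟨i, j, hij, hijs⟩ := Finset.card_eq_two.mp h
    rw [hijs, Finset.sum_pair hij] at hsum
    have his : i ∈ s := hijs ▸ Finset.mem_insert_self i {j}
    have hjs : j ∈ s := hijs ▸ Finset.mem_insert_of_mem (Finset.mem_singleton_self j)
    have hti := hterm i his
    have htj := hterm j hjs
    have hei : l.get i * (x i) ^ 2 = n := by linarith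
    have hej : l.get j * (x j) ^ 2 = n := by linarith
    right
    constructor
    · linarith
    · have hgi : l.get i = n := single i n hei (hxs i his) (by linarith)
      have hgj : l.get j = n := single j n hej (hxs j hjs) (by linarith)
      have hne' : (i : ℕ) ≠ (j : ℕ) := fun hh => hij (Fin.ext hh)
      rcases lt_or_gt_of_ne hne' with hlt' | hlt'
      · exact two_le_count hlt' hgi hgj
      · exact two_le_count hlt' hgj hgi

theorem stmt_2 (n : ℕ) (hn : 2 ≤ n) (l : List ℤ)
    (hsort : l.Pairwise (· ≤ ·)) (hpos : ∀ a ∈ l, 0 < a)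
    (htight : ListTight n l) :
    List.Sublist (List.map (fun j => (n : ℤ) + j) (List.range (n + 1))) l ∨
    List.Sublist ((n : ℤ) :: List.map (fun j => (n : ℤ) + j) (List.range n)) l := by
  have hco : ∀ t : List ℕ, (do let a ← t; pure ((a:ℤ)) : List ℤ) = t.map (fun a : ℕ => (a : ℤ)) := by
    intro t
    induction t with
    | nil => rfl
    | cons h t ih => simpa using ih
  simp only [hco, List.map_map, Function.comp_def]
  have hn0 : (0 : ℤ) < n := by exact_mod_cast Nat.lt_of_lt_of_le (by norm_num) hn
  have hcoeff : ∀ a ∈ l, (n : ℤ) ≤ a := by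
    intro a ha
    obtain ⟨i, hi⟩ := List.mem_iff_get.mp ha
    have hane : a ≠ 0 := (hpos a ha).ne'
    refine (htight a hane).mp ⟨fun j => if j = i then 1 else 0, ?_⟩
    have key : ∀ j, l.get j * (if j = i then (1:ℤ) else 0) ^ 2
        = if j = i then l.get j else 0 := by
      intro j; split <;> simp
    rw [Finset.sum_congr rfl (fun j _ => key j),
      Finset.sum_ite_eq' Finset.univ i (fun j => l.get j),
      if_pos (Finset.mem_univ i), hi]
  have hrep : ∀ m : ℤ, (n : ℤ) ≤ m → ListRep l m := by
    intro m hm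
    exact (htight m (by omega)).mpr hm
  have hmem : ∀ m : ℤ, (n : ℤ) ≤ m → m < 2 * n → m ∈ l := by
    intro m h1 h2
    rcases rep_structure n hn0 l hcoeff m (by omega) (by omega) (hrep m h1) with h | h
    · exact h
    · omega
  have h2n := rep_structure n hn0 l hcoeff (2 * n) (by omega) le_rfl
    (hrep (2 * n) (by omega))
  have hsorted : ∀ k : ℕ, (List.map (fun a : ℕ => (n : ℤ) + a) (List.range k)).Pairwise (· ≤ ·) := by
    intro k
    refine List.pairwise_map.mpr ((List.pairwise_lt_range (n := k)).imp ?_)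
    intro a b hab
    have : (a : ℤ) ≤ b := by exact_mod_cast hab.le
    linarith
  have hinj : Function.Injective (fun a : ℕ => (n : ℤ) + a) := by
    intro a b hab
    simp only at hab
    exact_mod_cast add_left_cancel hab
  have hnodup : ∀ k : ℕ, (List.map (fun a : ℕ => (n : ℤ) + a) (List.range k)).Nodup :=
    fun k => (List.nodup_range (n := k)).map hinj
  rcases h2n with h | ⟨_, hcnt⟩
  · left
    apply List.sublist_of_subperm_of_pairwise _ (hsorted (n + 1)) hsort
    rw [List.subperm_ext_iff]
    intro a ha
    rw [List.count_eq_one_of_mem (hnodup (n + 1)) ha]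
    obtain ⟨j, hj, rfl⟩ := List.mem_map.mp ha
    rw [List.mem_range] at hj
    have hal : (n : ℤ) + j ∈ l := by
      rcases Nat.lt_or_ge j n with hjn | hjn
      · exact hmem _ (by omega) (by push_cast; omega)
      · have heq : ((n : ℤ) + j) = 2 * n := by push_cast; omega
        rwa [heq]
    exact List.count_pos_iff.mpr hal
  · right
    apply List.sublist_of_subperm_of_pairwise _ ?_ hsort
    · rw [List.subperm_ext_iff]
      intro a ha
      by_cases hna : a = (n : ℤ)
      · subst hna
        rw [List.count_cons_self]
        have hmm : (n : ℤ) ∈ List.map (fun a : ℕ => (n : ℤ) + a) (List.range n) := by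
          refine List.mem_map.mpr ⟨0, ?_, by simp⟩
          simp
          omega
        rw [List.count_eq_one_of_mem (hnodup n) hmm]
        exact hcnt
      · rw [List.count_cons_of_ne (Ne.symm hna)]
        have ha' : a ∈ List.map (fun a : ℕ => (n : ℤ) + a) (List.range n) := by
          rcases List.mem_cons.mp ha with h | h
          · exact absurd h hna
          · exact h
        rw [List.count_eq_one_of_mem (hnodup n) ha']
        obtain ⟨j, hj, rfl⟩ := List.mem_map.mp ha'
        rw [List.mem_range] at hj
        exact List.count_pos_iff.mpr (hmem _ (by omega) (by push_cast; omega))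
    · refine List.pairwise_cons.mpr ⟨?_, hsorted n⟩
      intro b hb
      obtain ⟨j, _, rfl⟩ := List.mem_map.mp hb
      have : (0 : ℤ) ≤ j := Int.natCast_nonneg j
      linarith
end

section
/- Let n be a positive integer and let f be a positive definite integral quadratic form of rank r. Assume that the minimum nonzero value of f on ℤ^r is n or n+1, and that f represents every integer m with n+1 ≤ m ≤ 2n−1. Then the form g(x_1,x_2,x_3,x_4,y) = n(x_1² + x_2² + x_3² + x_4²) + f(y) of rank r+4 is tight T(n)-universal; consequently t(n) ≤ r + 4. -/
/-- The value of the integral quadratic form given by the symmetric matrix `M`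
at the integer vector `x`: `∑ i j, M i j * x i * x j`. -/
def QFval {k : ℕ} (M : Matrix (Fin k) (Fin k) ℤ) (x : Fin k → ℤ) : ℤ :=
  ∑ i, ∑ j, M i j * x i * x j

/-- The quadratic form given by `M` is positive definite. -/
def QFPosDef {k : ℕ} (M : Matrix (Fin k) (Fin k) ℤ) : Prop :=
  ∀ x : Fin k → ℤ, x ≠ 0 → 0 < QFval M x

/-- The integer `m` is represented by the quadratic form given by `M`. -/
def QFRep {k : ℕ} (M : Matrix (Fin k) (Fin k) ℤ) (m : ℤ) : Prop :=
  ∃ x : Fin k → ℤ, QFval M x = m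

/-- The quadratic form given by `M` is tight `T(n)`-universal: the set of nonzero
integers it represents is exactly the set of integers `≥ n`. -/
def QFTight (n : ℕ) {k : ℕ} (M : Matrix (Fin k) (Fin k) ℤ) : Prop :=
  ∀ m : ℤ, m ≠ 0 → (QFRep M m ↔ (n : ℤ) ≤ m)

lemma four_sq (m : ℤ) (hm : 0 ≤ m) : ∃ x : Fin 4 → ℤ, (∑ i, (x i)^2) = m := by
  obtain ⟨a, b, c, d, h⟩ := Nat.sum_four_squares m.toNat
  refine ⟨![(a:ℤ), b, c, d], ?_⟩
  have h2 : ((a^2+b^2+c^2+d^2 : ℕ) : ℤ) = m := by rw [h]; exact Int.toNat_of_nonneg hm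
  push_cast at h2
  simp [Fin.sum_univ_four]
  linarith

def blockM (n : ℕ) {r : ℕ} (F : Matrix (Fin r) (Fin r) ℤ) :
    Matrix (Fin (4 + r)) (Fin (4 + r)) ℤ :=
  Matrix.of fun i j =>
    Fin.addCases (motive := fun _ => ℤ)
      (fun i4 => Fin.addCases (motive := fun _ => ℤ)
        (fun j4 => if i4 = j4 then (n : ℤ) else 0) (fun _ => 0) j)
      (fun ir => Fin.addCases (motive := fun _ => ℤ)
        (fun _ => 0) (fun jr => F ir jr) j) i

lemma QFval_blockM (n : ℕ) {r : ℕ} (F : Matrix (Fin r) (Fin r) ℤ) (x : Fin (4 + r) → ℤ) :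
    QFval (blockM n F) x =
      (n : ℤ) * (∑ i : Fin 4, (x (Fin.castAdd r i))^2)
        + QFval F (fun j => x (Fin.natAdd 4 j)) := by
  unfold QFval blockM
  simp only [Matrix.of_apply, Fin.sum_univ_add, Fin.addCases_left, Fin.addCases_right,
    zero_mul, Finset.sum_const_zero, add_zero, zero_add, ite_mul]
  rw [Finset.mul_sum]
  congr 1
  apply Finset.sum_congr rfl
  intro i _
  rw [Finset.sum_ite_eq (Finset.univ : Finset (Fin 4)) i (fun j => (n:ℤ) * x (Fin.castAdd r i) * x (Fin.castAdd r j))]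
  · simp; ring

lemma blockM_symm (n : ℕ) {r : ℕ} (F : Matrix (Fin r) (Fin r) ℤ) (hsym : F.IsSymm) :
    (blockM n F).IsSymm := by
  unfold Matrix.IsSymm
  ext i j
  rw [Matrix.transpose_apply]
  unfold blockM
  cases i using Fin.addCases with
  | left i4 =>
    cases j using Fin.addCases with
    | left j4 => simp [eq_comm]
    | right jr => simp
  | right ir =>
    cases j using Fin.addCases with
    | left j4 => simp
    | right jr => simp [hsym.apply]

lemma QFval_zero {r : ℕ} (F : Matrix (Fin r) (Fin r) ℤ) : QFval F 0 = 0 := by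
  simp [QFval]

lemma key_equiv (n : ℕ) (hn : 0 < n) (r : ℕ) (F : Matrix (Fin r) (Fin r) ℤ)
    (hpd : QFPosDef F)
    (hmin : IsLeast {m : ℤ | ∃ x : Fin r → ℤ, x ≠ 0 ∧ QFval F x = m} (n : ℤ) ∨
            IsLeast {m : ℤ | ∃ x : Fin r → ℤ, x ≠ 0 ∧ QFval F x = m} ((n : ℤ) + 1))
    (hrep : ∀ m : ℤ, (n : ℤ) + 1 ≤ m → m ≤ 2 * (n : ℤ) - 1 → QFRep F m) :
    ∀ m : ℤ, m ≠ 0 →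
      ((∃ x : Fin 4 → ℤ, ∃ y : Fin r → ℤ,
          (n : ℤ) * (∑ i, (x i) ^ 2) + QFval F y = m) ↔ (n : ℤ) ≤ m) := by
  have hlb : ∀ y : Fin r → ℤ, y ≠ 0 → (n : ℤ) ≤ QFval F y := by
    intro y hy
    rcases hmin with ⟨_, hb⟩ | ⟨_, hb⟩
    · exact hb ⟨y, hy, rfl⟩
    · have := hb ⟨y, hy, rfl⟩; linarith
  intro m hm
  constructor
  · rintro ⟨x, y, hxy⟩
    have hS : 0 ≤ ∑ i, (x i) ^ 2 := Finset.sum_nonneg fun i _ => sq_nonneg _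
    by_cases hy : y = 0
    · subst hy
      rw [QFval_zero, add_zero] at hxy
      have hS1 : 1 ≤ ∑ i, (x i) ^ 2 := by
        rcases lt_or_eq_of_le hS with h | h
        · linarith
        · exfalso; apply hm; rw [← hxy, ← h, mul_zero]
      calc (n : ℤ) = (n : ℤ) * 1 := by ring
        _ ≤ (n : ℤ) * ∑ i, (x i) ^ 2 := by
            apply mul_le_mul_of_nonneg_left hS1 (by positivity)
        _ = m := hxy
    · have h1 := hlb y hy
      have h2 : (0 : ℤ) ≤ (n : ℤ) * ∑ i, (x i) ^ 2 := by positivity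
      linarith
  · intro hnm
    set t := m % (n : ℤ) with ht
    have hnpos : (0 : ℤ) < n := by exact_mod_cast hn
    have ht0 : 0 ≤ t := Int.emod_nonneg m (by linarith)
    have htn : t < n := Int.emod_lt_of_pos m hnpos
    have hdm : m = (n : ℤ) * (m / n) + t := (Int.mul_ediv_add_emod m n).symm
    have hq1 : 1 ≤ m / (n : ℤ) := by
      rcases le_or_gt 1 (m / (n:ℤ)) with h | h
      · exact h
      · exfalso
        have : m / (n:ℤ) ≤ 0 := by linarith
        nlinarith [mul_le_mul_of_nonneg_left this (le_of_lt hnpos)]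
    by_cases htz : t = 0
    · obtain ⟨x, hx⟩ := four_sq (m / n) (by linarith)
      exact ⟨x, 0, by rw [QFval_zero, hx, add_zero]; omega⟩
    · have ht1 : 1 ≤ t := by omega
      obtain ⟨y, hy⟩ := hrep ((n : ℤ) + t) (by linarith) (by omega)
      obtain ⟨x, hx⟩ := four_sq (m / n - 1) (by linarith)
      exact ⟨x, y, by rw [hx, hy]; ring_nf; omega⟩

/-- Lemma: if a positive definite form `f` of rank `r` has minimum nonzero value `n` or
`n+1` and represents all integers in `[n+1, 2n-1]`, then
`n(x₁²+x₂²+x₃²+x₄²) + f(y)` is tight `T(n)`-universal, so `t(n) ≤ r + 4`. -/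
theorem stmt_12 (n : ℕ) (hn : 0 < n) (r : ℕ) (F : Matrix (Fin r) (Fin r) ℤ)
    (hsym : F.IsSymm) (hpd : QFPosDef F)
    (hmin : IsLeast {m : ℤ | ∃ x : Fin r → ℤ, x ≠ 0 ∧ QFval F x = m} (n : ℤ) ∨
            IsLeast {m : ℤ | ∃ x : Fin r → ℤ, x ≠ 0 ∧ QFval F x = m} ((n : ℤ) + 1))
    (hrep : ∀ m : ℤ, (n : ℤ) + 1 ≤ m → m ≤ 2 * (n : ℤ) - 1 → QFRep F m) :
    (∀ m : ℤ, m ≠ 0 →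
      ((∃ x : Fin 4 → ℤ, ∃ y : Fin r → ℤ,
          (n : ℤ) * (∑ i, (x i) ^ 2) + QFval F y = m) ↔ (n : ℤ) ≤ m)) ∧
    ∃ k ≤ r + 4, ∃ M : Matrix (Fin k) (Fin k) ℤ,
      M.IsSymm ∧ QFPosDef M ∧ QFTight n M := by
  have key := key_equiv n hn r F hpd hmin hrep
  have hQFRep : ∀ m : ℤ, QFRep (blockM n F) m ↔
      (∃ x : Fin 4 → ℤ, ∃ y : Fin r → ℤ,
        (n : ℤ) * (∑ i, (x i) ^ 2) + QFval F y = m) := by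
    intro m
    constructor
    · rintro ⟨z, hz⟩
      exact ⟨fun i => z (Fin.castAdd r i), fun j => z (Fin.natAdd 4 j),
        by rw [← QFval_blockM]; exact hz⟩
    · rintro ⟨x, y, hxy⟩
      refine ⟨Fin.addCases (motive := fun _ => ℤ) x y, ?_⟩
      rw [QFval_blockM]
      simpa using hxy
  refine ⟨key, 4 + r, by omega, blockM n F, blockM_symm n F hsym, ?_, ?_⟩
  · intro z hz
    rw [QFval_blockM]
    have hS : 0 ≤ ∑ i : Fin 4, (z (Fin.castAdd r i)) ^ 2 :=
      Finset.sum_nonneg fun i _ => sq_nonneg _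
    by_cases hy : (fun j => z (Fin.natAdd 4 j)) = 0
    · have hx : ∃ i : Fin 4, z (Fin.castAdd r i) ≠ 0 := by
        by_contra hc
        push_neg at hc
        apply hz
        funext i
        cases i using Fin.addCases with
        | left i4 => exact hc i4
        | right ir => exact congrFun hy ir
      obtain ⟨i, hi⟩ := hx
      have h1 : 0 < ∑ j : Fin 4, (z (Fin.castAdd r j)) ^ 2 :=
        Finset.sum_pos' (fun j _ => sq_nonneg _) ⟨i, Finset.mem_univ i, by positivity⟩
      have h2 : QFval F (fun j => z (Fin.natAdd 4 j)) = 0 := by rw [hy, QFval_zero]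
      have : (0:ℤ) < n := by exact_mod_cast hn
      nlinarith
    · have := hpd _ hy
      have : (0:ℤ) ≤ (n : ℤ) * ∑ i : Fin 4, (z (Fin.castAdd r i)) ^ 2 := by positivity
      linarith [hpd _ hy]
  · intro m hm
    rw [hQFRep m]
    exact key m hm
end

section
/- For any positive integer n, t(n) ≤ ⌊(⌊√n⌋ − 1)/2⌋ + ⌊√n⌋ + 7, where ⌊·⌋ denotes the integer part. -/
/-- The coefficient of the rank-one part. -/
def mainA (s w : ℕ) : Fin (s + w + 1) ⊕ Fin 4 → ℤ :=
  Sum.elim (fun t => if (t : ℕ) = s + w then 2 else 1) (fun _ => 0)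

/-- The diagonal coefficients. -/
def mainD (n s h w ε : ℕ) : Fin (s + w + 1) ⊕ Fin 4 → ℤ :=
  Sum.elim (fun t => if (t : ℕ) < s then (h : ℤ) + ((t : ℕ) : ℤ)
      else if (t : ℕ) = s + w then (h : ℤ)
      else (h : ℤ) + ((((t : ℕ) + 1 - s) * s : ℕ) : ℤ) - (ε : ℤ))
    (fun _ => (n : ℤ))

def coreM (n s h w ε : ℕ) : Matrix (Fin (s + w + 1 + 4)) (Fin (s + w + 1 + 4)) ℤ :=
  fun i j => ((n - h : ℕ) : ℤ) * mainA s w (finSumFinEquiv.symm i) * mainA s w (finSumFinEquiv.symm j)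
    + if i = j then mainD n s h w ε (finSumFinEquiv.symm i) else 0

def coreG (n s h w ε : ℕ) (y : Fin (s + w + 1) ⊕ Fin 4 → ℤ) : ℤ :=
  ((n - h : ℕ) : ℤ) * (∑ t, mainA s w t * y t) ^ 2 + ∑ t, mainD n s h w ε t * (y t) ^ 2

lemma QFval_struct {k : ℕ} {ι : Type} [Fintype ι] [DecidableEq ι] (e : ι ≃ Fin k)
    (W : ℤ) (a d : ι → ℤ) (x : Fin k → ℤ) :
    QFval (fun i j => W * a (e.symm i) * a (e.symm j)
        + if i = j then d (e.symm i) else 0) x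
      = W * (∑ t, a t * x (e t)) ^ 2 + ∑ t, d t * (x (e t)) ^ 2 := by
  unfold QFval
  have h1 : ∀ i j : Fin k,
      (W * a (e.symm i) * a (e.symm j) + if i = j then d (e.symm i) else 0) * x i * x j
      = W * ((a (e.symm i) * x i) * (a (e.symm j) * x j))
        + (if i = j then (d (e.symm i) * x i) * x j else 0) := by
    intro i j; split <;> ring
  simp_rw [h1, Finset.sum_add_distrib]
  congr 1
  · have h2 : (∑ t, a t * x (e t)) = ∑ i, a (e.symm i) * x i := by
      rw [← Equiv.sum_comp e (fun i => a (e.symm i) * x i)]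
      simp
    rw [h2, sq, Finset.sum_mul_sum, Finset.mul_sum]
    simp_rw [Finset.mul_sum]
  · have h3 : ∀ i : Fin k, (∑ j, if i = j then (d (e.symm i) * x i) * x j else 0)
        = d (e.symm i) * x i ^ 2 := by
      intro i
      rw [Finset.sum_ite_eq]
      simp [sq, mul_assoc]
    simp_rw [h3]
    rw [← Equiv.sum_comp e (fun i => d (e.symm i) * x i ^ 2)]
    simp

lemma coreM_val (n s h w ε : ℕ) (x : Fin (s + w + 1 + 4) → ℤ) :
    QFval (coreM n s h w ε) x = coreG n s h w ε (fun t => x (finSumFinEquiv t)) := by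
  unfold coreM coreG
  exact QFval_struct finSumFinEquiv _ _ _ x

lemma one_le_sq {v : ℤ} (hv : v ≠ 0) : 1 ≤ v ^ 2 := by
  rcases lt_or_gt_of_ne hv with h | h <;> nlinarith

lemma sum_ite2 {ι : Type} [Fintype ι] [DecidableEq ι] (I Q : ι) (hIQ : I ≠ Q)
    (F : ι → ℤ → ℤ) (hF : ∀ t, F t 0 = 0) (a b : ℤ) :
    ∑ t, F t (if t = I then a else if t = Q then b else 0) = F I a + F Q b := by
  rw [← Finset.sum_subset (Finset.subset_univ ({I, Q} : Finset ι))]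
  · rw [Finset.sum_insert (by simp [hIQ]), Finset.sum_singleton]
    simp [hIQ, Ne.symm hIQ]
  · intro t _ ht
    simp only [Finset.mem_insert, Finset.mem_singleton, not_or] at ht
    simp [ht.1, ht.2, hF]

lemma sum_ite3 {ι : Type} [Fintype ι] [DecidableEq ι] (I J Q : ι)
    (hIJ : I ≠ J) (hIQ : I ≠ Q) (hJQ : J ≠ Q)
    (F : ι → ℤ → ℤ) (hF : ∀ t, F t 0 = 0) (a b c : ℤ) :
    ∑ t, F t (if t = I then a else if t = J then b else if t = Q then c else 0)
      = F I a + F J b + F Q c := by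
  rw [← Finset.sum_subset (Finset.subset_univ ({I, J, Q} : Finset ι))]
  · rw [Finset.sum_insert (by simp [hIJ, hIQ]), Finset.sum_insert (by simp [hJQ]),
      Finset.sum_singleton]
    simp [hIJ, hIQ, hJQ, Ne.symm hIJ, Ne.symm hIQ, Ne.symm hJQ]
    ring
  · intro t _ ht
    simp only [Finset.mem_insert, Finset.mem_singleton, not_or] at ht
    simp [ht.1, ht.2.1, ht.2.2, hF]

lemma coreG_eval2 (n s h w ε : ℕ) (I Q : Fin (s + w + 1)) (hIQ : I ≠ Q)
    (a b : ℤ) (zf : Fin 4 → ℤ) :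
    coreG n s h w ε
      (Sum.elim (fun t => if t = I then a else if t = Q then b else 0) zf)
    = ((n - h : ℕ) : ℤ) * (mainA s w (Sum.inl I) * a + mainA s w (Sum.inl Q) * b
        + ∑ zi, mainA s w (Sum.inr zi) * zf zi) ^ 2
      + (mainD n s h w ε (Sum.inl I) * a ^ 2 + mainD n s h w ε (Sum.inl Q) * b ^ 2
        + ∑ zi, mainD n s h w ε (Sum.inr zi) * (zf zi) ^ 2) := by
  unfold coreG
  rw [Fintype.sum_sum_type, Fintype.sum_sum_type]
  simp only [Sum.elim_inl, Sum.elim_inr]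
  rw [sum_ite2 I Q hIQ (fun t v => mainA s w (Sum.inl t) * v) (by simp) a b,
    sum_ite2 I Q hIQ (fun t v => mainD n s h w ε (Sum.inl t) * v ^ 2) (by simp) a b]

lemma coreG_eval3 (n s h w ε : ℕ) (I J Q : Fin (s + w + 1))
    (hIJ : I ≠ J) (hIQ : I ≠ Q) (hJQ : J ≠ Q)
    (a b c : ℤ) (zf : Fin 4 → ℤ) :
    coreG n s h w ε
      (Sum.elim (fun t => if t = I then a else if t = J then b else if t = Q then c else 0) zf)
    = ((n - h : ℕ) : ℤ) * (mainA s w (Sum.inl I) * a + mainA s w (Sum.inl J) * b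
        + mainA s w (Sum.inl Q) * c + ∑ zi, mainA s w (Sum.inr zi) * zf zi) ^ 2
      + (mainD n s h w ε (Sum.inl I) * a ^ 2 + mainD n s h w ε (Sum.inl J) * b ^ 2
        + mainD n s h w ε (Sum.inl Q) * c ^ 2
        + ∑ zi, mainD n s h w ε (Sum.inr zi) * (zf zi) ^ 2) := by
  unfold coreG
  rw [Fintype.sum_sum_type, Fintype.sum_sum_type]
  simp only [Sum.elim_inl, Sum.elim_inr]
  rw [sum_ite3 I J Q hIJ hIQ hJQ (fun t v => mainA s w (Sum.inl t) * v) (by simp) a b c,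
    sum_ite3 I J Q hIJ hIQ hJQ (fun t v => mainD n s h w ε (Sum.inl t) * v ^ 2) (by simp) a b c]

lemma mainD_low (n s h w ε : ℕ) (hs : 1 ≤ s) (hε : ε ≤ 1) (t : Fin (s + w + 1)) :
    (h : ℤ) ≤ mainD n s h w ε (Sum.inl t) := by
  simp only [mainD, Sum.elim_inl]
  split_ifs with h1 h2
  · have : (0 : ℤ) ≤ ((t : ℕ) : ℤ) := Int.natCast_nonneg _
    linarith
  · exact le_refl _
  · have ht : s ≤ (t : ℕ) := by omega
    have h3 : s ≤ ((t : ℕ) + 1 - s) * s := Nat.le_mul_of_pos_left s (by omega)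
    have h4 : (ε : ℤ) ≤ (((((t : ℕ) + 1 - s)) * s : ℕ) : ℤ) := by
      exact_mod_cast le_trans (by omega : ε ≤ s) h3
    linarith

lemma mainD_nonneg (n s h w ε : ℕ) (hs : 1 ≤ s) (hε : ε ≤ 1) (u : Fin (s + w + 1) ⊕ Fin 4) :
    0 ≤ mainD n s h w ε u := by
  cases u with
  | inl t => exact le_trans (Int.natCast_nonneg _) (mainD_low n s h w ε hs hε t)
  | inr z => exact Int.natCast_nonneg _

lemma coreG_min (n s h w ε : ℕ) (hn : 0 < n) (hs : 1 ≤ s) (h2h : 2 * h = n + ε)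
    (hε : ε ≤ 1) (hhn : h ≤ n) :
    ∀ y : Fin (s + w + 1) ⊕ Fin 4 → ℤ, y ≠ 0 → (n : ℤ) ≤ coreG n s h w ε y := by
  intro y hy
  have hterm : ∀ u, 0 ≤ mainD n s h w ε u * y u ^ 2 :=
    fun u => mul_nonneg (mainD_nonneg n s h w ε hs hε u) (sq_nonneg _)
  have hW2 : 0 ≤ ((n - h : ℕ) : ℤ) * (∑ t, mainA s w t * y t) ^ 2 :=
    mul_nonneg (Int.natCast_nonneg _) (sq_nonneg _)
  have hWh : ((n - h : ℕ) : ℤ) + (h : ℤ) = (n : ℤ) := by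
    have : n - h + h = n := by omega
    exact_mod_cast congrArg (Nat.cast : ℕ → ℤ) this
  have h2hZ : 2 * (h : ℤ) = (n : ℤ) + (ε : ℤ) := by exact_mod_cast h2h
  have hεZ : (0 : ℤ) ≤ (ε : ℤ) := Int.natCast_nonneg _
  unfold coreG
  by_cases hz : ∃ zi, y (Sum.inr zi) ≠ 0
  · obtain ⟨zi, hzi⟩ := hz
    have h1 : mainD n s h w ε (Sum.inr zi) * y (Sum.inr zi) ^ 2
        ≤ ∑ u, mainD n s h w ε u * y u ^ 2 :=
      Finset.single_le_sum (fun u _ => hterm u) (Finset.mem_univ _)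
    have h2 : 1 ≤ y (Sum.inr zi) ^ 2 := one_le_sq hzi
    have h3 : mainD n s h w ε (Sum.inr zi) = (n : ℤ) := rfl
    rw [h3] at h1
    nlinarith [Int.natCast_nonneg n]
  · push_neg at hz
    have hmain : ∃ t : Fin (s + w + 1), y (Sum.inl t) ≠ 0 := by
      by_contra hc
      push_neg at hc
      apply hy
      funext u
      cases u with
      | inl t => exact hc t
      | inr z => exact hz z
    obtain ⟨t₀, ht₀⟩ := hmain
    by_cases h2 : ∃ t₁, t₁ ≠ t₀ ∧ y (Sum.inl t₁) ≠ 0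
    · obtain ⟨t₁, ht₁ne, ht₁⟩ := h2
      have hpair : ∑ u ∈ ({Sum.inl t₀, Sum.inl t₁} : Finset (Fin (s + w + 1) ⊕ Fin 4)),
          mainD n s h w ε u * y u ^ 2 ≤ ∑ u, mainD n s h w ε u * y u ^ 2 :=
        Finset.sum_le_sum_of_subset_of_nonneg (Finset.subset_univ _) (fun u _ _ => hterm u)
      rw [Finset.sum_pair (by simpa using Ne.symm ht₁ne)] at hpair
      have e0 : 1 ≤ y (Sum.inl t₀) ^ 2 := one_le_sq ht₀
      have e1 : 1 ≤ y (Sum.inl t₁) ^ 2 := one_le_sq ht₁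
      have d0 := mainD_low n s h w ε hs hε t₀
      have d1 := mainD_low n s h w ε hs hε t₁
      have hh0 : (0 : ℤ) ≤ (h : ℤ) := Int.natCast_nonneg _
      nlinarith
    · push_neg at h2
      have hL : ∑ u, mainA s w u * y u = mainA s w (Sum.inl t₀) * y (Sum.inl t₀) := by
        apply Finset.sum_eq_single
        · intro u _ hu
          cases u with
          | inl t =>
            rw [h2 t (fun hteq => hu (by rw [hteq]))]
            ring
          | inr z => rw [hz z]; ring
        · intro hnotmem
          exact absurd (Finset.mem_univ _) hnotmem
      have hQ : ∑ u, mainD n s h w ε u * y u ^ 2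
          = mainD n s h w ε (Sum.inl t₀) * y (Sum.inl t₀) ^ 2 := by
        apply Finset.sum_eq_single
        · intro u _ hu
          cases u with
          | inl t =>
            rw [h2 t (fun hteq => hu (by rw [hteq]))]
            ring
          | inr z => rw [hz z]; ring
        · intro hnotmem
          exact absurd (Finset.mem_univ _) hnotmem
      rw [hL, hQ]
      have ha : 1 ≤ mainA s w (Sum.inl t₀) := by
        simp only [mainA, Sum.elim_inl]
        split <;> norm_num
      have hv : 1 ≤ y (Sum.inl t₀) ^ 2 := one_le_sq ht₀
      have d0 := mainD_low n s h w ε hs hε t₀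
      have hh0 : (0 : ℤ) ≤ (h : ℤ) := Int.natCast_nonneg _
      have hWnn : (0 : ℤ) ≤ ((n - h : ℕ) : ℤ) := Int.natCast_nonneg _
      have hA2 : 1 ≤ mainA s w (Sum.inl t₀) ^ 2 := by nlinarith
      have hAv : 1 ≤ (mainA s w (Sum.inl t₀) * y (Sum.inl t₀)) ^ 2 := by
        rw [mul_pow]
        nlinarith
      nlinarith


lemma mainA_val (s w : ℕ) (v : ℕ) (hv : v < s + w + 1) :
    mainA s w (Sum.inl ⟨v, hv⟩) = if v = s + w then 2 else 1 := rfl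

lemma mainD_val (n s h w ε : ℕ) (v : ℕ) (hv : v < s + w + 1) :
    mainD n s h w ε (Sum.inl ⟨v, hv⟩)
      = if v < s then (h : ℤ) + (v : ℤ)
        else if v = s + w then (h : ℤ)
        else (h : ℤ) + (((v + 1 - s) * s : ℕ) : ℤ) - (ε : ℤ) := rfl

lemma coreG_rep (n s h w ε : ℕ) (hn : 0 < n) (hs : 1 ≤ s) (h2h : 2 * h = n + ε)
    (hε : ε ≤ 1) (hhn : h ≤ n) (hw : ∀ δ : ℕ, δ < h → δ / s ≤ w) :
    ∀ m : ℤ, (n : ℤ) ≤ m → ∃ y, coreG n s h w ε y = m := by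
  intro m hm
  have hh1 : 1 ≤ h := by omega
  have hMn : (((m - (n : ℤ)).toNat : ℕ) : ℤ) = m - n := Int.toNat_of_nonneg (by linarith)
  set Mn := (m - (n : ℤ)).toNat with hMndef
  set Z := Mn / n with hZdef
  set δ := Mn % n with hδdef
  have hδn : δ < n := Nat.mod_lt _ hn
  have hZd : n * Z + δ = Mn := Nat.div_add_mod Mn n
  have hmrel : ((n * Z : ℕ) : ℤ) + ((δ : ℕ) : ℤ) = m - (n : ℤ) := by
    rw [← hMn]
    exact_mod_cast congrArg (Nat.cast : ℕ → ℤ) hZd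
  obtain ⟨z1, z2, z3, z4, hzsq⟩ := Nat.sum_four_squares Z
  set zf : Fin 4 → ℤ := ![(z1 : ℤ), (z2 : ℤ), (z3 : ℤ), (z4 : ℤ)] with hzfdef
  have hzD : ∑ zi : Fin 4, mainD n s h w ε (Sum.inr zi) * (zf zi) ^ 2 = ((n * Z : ℕ) : ℤ) := by
    have hDz : ∀ zi : Fin 4, mainD n s h w ε (Sum.inr zi) = (n : ℤ) := fun _ => rfl
    simp only [hDz]
    rw [Fin.sum_univ_four]
    simp only [hzfdef, Matrix.cons_val_zero, Matrix.cons_val_one, Matrix.head_cons,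
      Matrix.cons_val_two, Matrix.tail_cons, Matrix.cons_val_three]
    push_cast [← hzsq]
    ring
  have hzA : ∑ zi : Fin 4, mainA s w (Sum.inr zi) * zf zi = 0 := by
    simp [mainA]
  have hWcast : ((n - h : ℕ) : ℤ) = (n : ℤ) - (h : ℤ) := by
    have h5 : n - h + h = n := by omega
    have h6 := congrArg (Nat.cast : ℕ → ℤ) h5
    push_cast at h6
    linarith
  have h2hZ : 2 * (h : ℤ) = (n : ℤ) + (ε : ℤ) := by exact_mod_cast h2h
  by_cases hph : δ < h
  · -- phase 0
    have hi : δ % s < s := Nat.mod_lt _ hs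
    have hj : δ / s ≤ w := hw δ hph
    have hδji : s * (δ / s) + δ % s = δ := Nat.div_add_mod δ s
    set j := δ / s with hjdef
    set i := δ % s with hidef
    by_cases hj0 : j = 0
    · -- single a_i
      have hIQ : (⟨i, by omega⟩ : Fin (s + w + 1)) ≠ ⟨s + w, by omega⟩ :=
        Fin.ne_of_val_ne (show i ≠ s + w by omega)
      refine ⟨Sum.elim (fun t => if t = ⟨i, by omega⟩ then 1
          else if t = ⟨s + w, by omega⟩ then 0 else 0) zf, ?_⟩
      rw [coreG_eval2 n s h w ε _ _ hIQ 1 0 zf, hzA, hzD]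
      rw [mainA_val, mainD_val, if_neg (show ¬ i = s + w by omega),
        if_pos (show i < s from hi), hWcast]
      have hδi : δ = i := by rw [hj0] at hδji; omega
      rw [hδi] at hmrel
      push_cast at hmrel ⊢
      linarith
    · -- pair (a_i, b_j)
      have hj1 : 1 ≤ j := Nat.pos_of_ne_zero hj0
      have hIJ : (⟨i, by omega⟩ : Fin (s + w + 1)) ≠ ⟨s - 1 + j, by omega⟩ :=
        Fin.ne_of_val_ne (show i ≠ s - 1 + j by omega)
      have hIQ : (⟨i, by omega⟩ : Fin (s + w + 1)) ≠ ⟨s + w, by omega⟩ :=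
        Fin.ne_of_val_ne (show i ≠ s + w by omega)
      have hJQ : (⟨s - 1 + j, by omega⟩ : Fin (s + w + 1)) ≠ ⟨s + w, by omega⟩ :=
        Fin.ne_of_val_ne (show s - 1 + j ≠ s + w by omega)
      refine ⟨Sum.elim (fun t => if t = ⟨i, by omega⟩ then -1
          else if t = ⟨s - 1 + j, by omega⟩ then 1
          else if t = ⟨s + w, by omega⟩ then 0 else 0) zf, ?_⟩
      rw [coreG_eval3 n s h w ε _ _ _ hIJ hIQ hJQ (-1) 1 0 zf, hzA, hzD]
      rw [mainA_val, mainA_val, mainD_val, mainD_val]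
      rw [if_neg (show ¬ i = s + w by omega), if_neg (show ¬ s - 1 + j = s + w by omega),
        if_pos (show i < s from hi), if_neg (show ¬ s - 1 + j < s by omega),
        if_neg (show ¬ s - 1 + j = s + w by omega),
        show s - 1 + j + 1 - s = j from by omega, hWcast]
      have hsji : ((s * j + i : ℕ) : ℤ) = ((δ : ℕ) : ℤ) := by exact_mod_cast hδji
      push_cast at hsji hmrel ⊢
      linarith
  · -- phase h
    have hδh : h ≤ δ := by omega
    have hδ0 : δ - h < h := by omega
    have hi : (δ - h) % s < s := Nat.mod_lt _ hs
    have hj : (δ - h) / s ≤ w := hw _ hδ0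
    have hδji : s * ((δ - h) / s) + (δ - h) % s = δ - h := Nat.div_add_mod _ s
    set j := (δ - h) / s with hjdef
    set i := (δ - h) % s with hidef
    by_cases hj0 : j = 0
    · -- (a_i, c)
      have hIQ : (⟨i, by omega⟩ : Fin (s + w + 1)) ≠ ⟨s + w, by omega⟩ :=
        Fin.ne_of_val_ne (show i ≠ s + w by omega)
      refine ⟨Sum.elim (fun t => if t = ⟨i, by omega⟩ then 1
          else if t = ⟨s + w, by omega⟩ then -1 else 0) zf, ?_⟩
      rw [coreG_eval2 n s h w ε _ _ hIQ 1 (-1) zf, hzA, hzD]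
      rw [mainA_val, mainA_val, mainD_val, mainD_val]
      rw [if_neg (show ¬ i = s + w by omega), if_pos (show s + w = s + w from rfl),
        if_pos (show i < s from hi), if_neg (show ¬ s + w < s by omega),
        if_pos (show s + w = s + w from rfl), hWcast]
      have hδi : δ = h + i := by rw [hj0] at hδji; omega
      rw [hδi] at hmrel
      push_cast at hmrel ⊢
      linarith
    · -- (a_i, b_j, c)
      have hj1 : 1 ≤ j := Nat.pos_of_ne_zero hj0
      have hIJ : (⟨i, by omega⟩ : Fin (s + w + 1)) ≠ ⟨s - 1 + j, by omega⟩ :=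
        Fin.ne_of_val_ne (show i ≠ s - 1 + j by omega)
      have hIQ : (⟨i, by omega⟩ : Fin (s + w + 1)) ≠ ⟨s + w, by omega⟩ :=
        Fin.ne_of_val_ne (show i ≠ s + w by omega)
      have hJQ : (⟨s - 1 + j, by omega⟩ : Fin (s + w + 1)) ≠ ⟨s + w, by omega⟩ :=
        Fin.ne_of_val_ne (show s - 1 + j ≠ s + w by omega)
      refine ⟨Sum.elim (fun t => if t = ⟨i, by omega⟩ then 1
          else if t = ⟨s - 1 + j, by omega⟩ then 1
          else if t = ⟨s + w, by omega⟩ then -1 else 0) zf, ?_⟩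
      rw [coreG_eval3 n s h w ε _ _ _ hIJ hIQ hJQ 1 1 (-1) zf, hzA, hzD]
      rw [mainA_val, mainA_val, mainA_val, mainD_val, mainD_val, mainD_val]
      rw [if_neg (show ¬ i = s + w by omega), if_neg (show ¬ s - 1 + j = s + w by omega),
        if_pos (show s + w = s + w from rfl),
        if_pos (show i < s from hi), if_neg (show ¬ s - 1 + j < s by omega),
        if_neg (show ¬ s - 1 + j = s + w by omega),
        show s - 1 + j + 1 - s = j from by omega,
        if_neg (show ¬ s + w < s by omega), if_pos (show s + w = s + w from rfl), hWcast]
      have hδdec : h + (s * j + i) = δ := by omega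
      have hδdecZ : ((h + (s * j + i) : ℕ) : ℤ) = ((δ : ℕ) : ℤ) := by exact_mod_cast hδdec
      push_cast at hδdecZ hmrel ⊢
      linarith

lemma coreM_symm (n s h w ε : ℕ) : (coreM n s h w ε).IsSymm := by
  apply Matrix.IsSymm.ext
  intro i j
  simp only [coreM]
  by_cases hij : i = j
  · subst hij; ring_nf
  · rw [if_neg hij, if_neg (Ne.symm hij)]
    ring

lemma core (n s h w ε : ℕ) (hn : 0 < n) (hs : 1 ≤ s) (h2h : 2 * h = n + ε)
    (hε : ε ≤ 1) (hhn : h ≤ n) (hw : ∀ δ : ℕ, δ < h → δ / s ≤ w) :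
    ∃ M : Matrix (Fin (s + w + 1 + 4)) (Fin (s + w + 1 + 4)) ℤ,
      M.IsSymm ∧ QFPosDef M ∧ QFTight n M := by
  refine ⟨coreM n s h w ε, coreM_symm n s h w ε, ?_, ?_⟩
  · -- positive definite
    intro x hx
    rw [coreM_val]
    have hy : (fun t => x (finSumFinEquiv t)) ≠ 0 := by
      intro hy0
      apply hx
      funext i
      have := congrFun hy0 (finSumFinEquiv.symm i)
      simpa using this
    have := coreG_min n s h w ε hn hs h2h hε hhn _ hy
    have hn' : (0 : ℤ) < (n : ℤ) := by exact_mod_cast hn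
    linarith
  · -- tight
    intro m hm
    constructor
    · rintro ⟨x, hx⟩
      rw [coreM_val] at hx
      by_cases hx0 : (fun t => x (finSumFinEquiv t)) = 0
      · rw [hx0] at hx
        simp [coreG] at hx
        exact absurd hx.symm hm
      · have := coreG_min n s h w ε hn hs h2h hε hhn _ hx0
        linarith
    · intro hnm
      obtain ⟨y, hy⟩ := coreG_rep n s h w ε hn hs h2h hε hhn hw m hnm
      refine ⟨fun i => y (finSumFinEquiv.symm i), ?_⟩
      rw [coreM_val]
      have : (fun t => y (finSumFinEquiv.symm (finSumFinEquiv t))) = y := by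
        funext t
        rw [Equiv.symm_apply_apply]
      rw [this, hy]

/-- Upper bound: `t(n) ≤ ⌊(⌊√n⌋ - 1)/2⌋ + ⌊√n⌋ + 7`. -/
theorem stmt_18 (n : ℕ) (hn : 0 < n) :
    ∃ k ≤ (Nat.sqrt n - 1) / 2 + Nat.sqrt n + 7, ∃ M : Matrix (Fin k) (Fin k) ℤ,
      M.IsSymm ∧ QFPosDef M ∧ QFTight n M := by
  set s := Nat.sqrt n with hsdef
  set h := (n + 1) / 2 with hhdef
  set ε := 2 * h - n with hεdef
  set w := (h - 1) / s with hwdef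
  have hs : 1 ≤ s := by
    rw [hsdef]
    exact Nat.sqrt_pos.mpr hn
  have h2h : 2 * h = n + ε := by omega
  have hε : ε ≤ 1 := by omega
  have hhn : h ≤ n := by omega
  have hw : ∀ δ : ℕ, δ < h → δ / s ≤ w := by
    intro δ hδ
    rw [hwdef]
    exact Nat.div_le_div_right (by omega)
  -- the rank bound
  have hsqlt : n < (s + 1) * (s + 1) := by
    rw [hsdef]
    exact Nat.lt_succ_sqrt n
  have hbound : s + w + 1 + 4 ≤ (s - 1) / 2 + s + 7 := by
    set u := (s - 1) / 2 with hudef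
    have hs2u : s ≤ 2 * u + 2 := by omega
    have hwu : w < u + 3 := by
      rw [hwdef]
      rw [Nat.div_lt_iff_lt_mul (by omega : 0 < s)]
      have hss : s * s ≤ (2 * u + 2) * s := Nat.mul_le_mul_right s hs2u
      have hexp : (s + 1) * (s + 1) = s * s + 2 * s + 1 := by ring
      have hexp2 : (u + 3) * s = u * s + 3 * s := by ring
      have hexp3 : (2 * u + 2) * s = 2 * (u * s) + 2 * s := by ring
      rw [hexp2]
      rw [hexp] at hsqlt
      rw [hexp3] at hss
      omega
    omega
  exact ⟨s + w + 1 + 4, hbound, core n s h w ε hn hs h2h hε hhn hw⟩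
end
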